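/- Let a, b ≥ 1 be coprime integers with a > b + 1 and a > b, and let X = {abm + 1 : m ∈ ℕ}. Then for every k ≥ 1, the k-th iterate of the operation Γ(Y) = aY - bY applied to X equals {abm + (a-b)^k : m ∈ ℤ}, and consequently the sequence of iterates Γ_k(X) is never eventually constant. -/

import Mathlib

/-- `Γ(Y) = aY - bY = {a y - b y' : y, y' ∈ Y}`. -/
def GammaDiff (a b : ℤ) (Y : Set ℤ) : Set ℤ :=
  {z | ∃ y ∈ Y, ∃ y' ∈ Y, z = a * y - b * y'}

/-- Iterates of `Γ`: `Γ_0(X) = X`, `Γ_{k+1}(X) = Γ(Γ_k(X))`. -/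
def GammaDiffIter (a b : ℤ) : ℕ → Set ℤ → Set ℤ
  | 0, X => X
  | k + 1, X => GammaDiff a b (GammaDiffIter a b k X)

lemma bezout_nat (a b : ℤ) (hb : 1 ≤ b) (hba : b < a) (hcop : IsCoprime a b) (n : ℤ) :
    ∃ m m' : ℕ, a * m - b * m' = n := by
  obtain ⟨u, v, huv⟩ := hcop
  set p : ℤ := n * u with hp'
  set q : ℤ := -(n * v) with hq'
  have hpq : a * p - b * q = n := by
    rw [hp', hq']; linear_combination n * huv
  set t : ℤ := max |p| |q| with ht'
  have ht0 : 0 ≤ t := le_trans (abs_nonneg p) (le_max_left _ _)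
  have hp0 : 0 ≤ p + b * t := by
    have h1 : |p| ≤ t := le_max_left _ _
    have h2 : t ≤ b * t := le_mul_of_one_le_left ht0 hb
    have := neg_abs_le p
    linarith
  have hq0 : 0 ≤ q + a * t := by
    have h1 : |q| ≤ t := le_max_right _ _
    have h2 : t ≤ a * t := le_mul_of_one_le_left ht0 (by linarith)
    have := neg_abs_le q
    linarith
  refine ⟨(p + b * t).toNat, (q + a * t).toNat, ?_⟩
  rw [Int.toNat_of_nonneg hp0, Int.toNat_of_nonneg hq0]
  linear_combination hpq

lemma bezout_int (a b : ℤ) (hcop : IsCoprime a b) (n : ℤ) :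
    ∃ m m' : ℤ, a * m - b * m' = n := by
  obtain ⟨u, v, huv⟩ := hcop
  exact ⟨n * u, -(n * v), by linear_combination n * huv⟩

lemma gamma_prog (a b : ℤ) (hcop : IsCoprime a b) (c : ℤ) :
    GammaDiff a b {z : ℤ | ∃ m : ℤ, z = a * b * m + c} =
      {z : ℤ | ∃ m : ℤ, z = a * b * m + (a - b) * c} := by
  ext z
  constructor
  · rintro ⟨y, ⟨m, rfl⟩, y', ⟨m', rfl⟩, rfl⟩
    exact ⟨a * m - b * m', by ring⟩
  · rintro ⟨m, rfl⟩
    obtain ⟨p, q, hpq⟩ := bezout_int a b hcop m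
    exact ⟨a * b * p + c, ⟨p, rfl⟩, a * b * q + c, ⟨q, rfl⟩, by linear_combination (-(a * b)) * hpq⟩

theorem iterates_of_progression_not_stable (a b : ℤ) (hb : 1 ≤ b) (hba : b < a)
    (hne : a ≠ b + 1) (hcop : IsCoprime a b) :
    (∀ k : ℕ, 1 ≤ k →
      GammaDiffIter a b k {z : ℤ | ∃ m : ℕ, z = a * b * m + 1} =
        {z : ℤ | ∃ m : ℤ, z = a * b * m + (a - b) ^ k}) ∧
    ¬ ∃ K : ℕ, ∀ k ≥ K,
      GammaDiffIter a b (k + 1) {z : ℤ | ∃ m : ℕ, z = a * b * m + 1} =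
        GammaDiffIter a b k {z : ℤ | ∃ m : ℕ, z = a * b * m + 1} := by
  set X : Set ℤ := {z : ℤ | ∃ m : ℕ, z = a * b * m + 1} with hX
  have base : GammaDiffIter a b 1 X = {z : ℤ | ∃ m : ℤ, z = a * b * m + (a - b) ^ 1} := by
    show GammaDiff a b X = _
    ext z
    constructor
    · rintro ⟨y, ⟨m, rfl⟩, y', ⟨m', rfl⟩, rfl⟩
      exact ⟨a * m - b * m', by ring⟩
    · rintro ⟨m, rfl⟩
      obtain ⟨p, q, hpq⟩ := bezout_nat a b hb hba hcop m
      exact ⟨a * b * p + 1, ⟨p, rfl⟩, a * b * q + 1, ⟨q, rfl⟩, by linear_combination (-(a * b)) * hpq⟩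
  have main : ∀ k : ℕ, 1 ≤ k →
      GammaDiffIter a b k X = {z : ℤ | ∃ m : ℤ, z = a * b * m + (a - b) ^ k} := by
    intro k hk
    induction k with
    | zero => omega
    | succ n ih =>
      rcases Nat.eq_or_lt_of_le hk with h | h
      · obtain rfl : n = 0 := by omega
        exact base
      · have hn : 1 ≤ n := by omega
        show GammaDiff a b (GammaDiffIter a b n X) = _
        rw [ih hn, gamma_prog a b hcop]
        ext z
        constructor
        · rintro ⟨m, rfl⟩; exact ⟨m, by ring⟩
        · rintro ⟨m, rfl⟩; exact ⟨m, by ring⟩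
  refine ⟨main, ?_⟩
  rintro ⟨K, hK⟩
  set k : ℕ := max K 1 with hk'
  have hk1 : 1 ≤ k := le_max_right _ _
  have heq := hK k (le_max_left _ _)
  rw [main k hk1, main (k + 1) (by omega)] at heq
  have hmem : (a - b) ^ (k + 1) ∈ {z : ℤ | ∃ m : ℤ, z = a * b * m + (a - b) ^ (k + 1)} :=
    ⟨0, by ring⟩
  rw [heq] at hmem
  obtain ⟨m, hm⟩ := hmem
  have hdvd : a * b ∣ (a - b) ^ k * (a - b - 1) := ⟨m, by linear_combination hm - pow_succ (a - b) k⟩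
  have hcop1 : IsCoprime a (a - b) := by
    have : IsCoprime a (b + a * (-1)) := hcop.add_mul_left_right (-1)
    have := this.neg_right
    simpa [neg_add, neg_mul] using (by convert this using 1 <;> first | rfl | ring : IsCoprime a (a - b))
  have hcop2 : IsCoprime b (a - b) := by
    have : IsCoprime b (a + b * (-1)) := hcop.symm.add_mul_left_right (-1)
    convert this using 1; ring
  have hcopab : IsCoprime (a * b) ((a - b) ^ k) := (hcop1.mul_left hcop2).pow_right
  have hdvd2 : a * b ∣ (a - b - 1) := hcopab.dvd_of_dvd_mul_left hdvd
  have hpos : 0 < a - b - 1 := by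
    have : b + 1 < a := lt_of_le_of_ne (by omega) (Ne.symm hne)
    omega
  have hle := Int.le_of_dvd hpos hdvd2
  have : a ≤ a * b := le_mul_of_one_le_right (by linarith) hb
  linarith
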